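/- Let F ∈ ℝ^{(q+1)×(q+1)} be the companion-type matrix with F_{i,i+1} = 1 for i ∈ {0,...,q−1}, F_{q,q} = −θ for θ ≥ 0, and all other entries 0. Then for all h, the matrix exponential A(h) = exp(hF) satisfies: A(h)_{ij} = 𝟙_{i≤j} h^{j−i}/(j−i)! for j ≠ q, and A(h)_{iq} = h^{q−i}/(q−i)! − θ Σ_{k=q+1−i}^∞ (−θ)^{k+i−q−1} h^k / k!. -/

import Mathlib

open Matrix

lemma powF_entry (q : ℕ) (θ : ℝ)
    (F : Matrix (Fin (q + 1)) (Fin (q + 1)) ℝ)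
    (hF : ∀ i j : Fin (q + 1),
      F i j = if (j : ℕ) = (i : ℕ) + 1 then 1
        else if (i : ℕ) = q ∧ (j : ℕ) = q then -θ else 0) :
    ∀ (n : ℕ) (i j : Fin (q + 1)),
      (F ^ n) i j = if (j : ℕ) = q then
          (if q - (i : ℕ) ≤ n then (-θ) ^ (n - (q - (i : ℕ))) else 0)
        else (if (j : ℕ) = (i : ℕ) + n then 1 else 0) := by
  intro n
  induction n with
  | zero =>
    intro i j
    have hiq : (i : ℕ) ≤ q := Nat.lt_succ_iff.mp i.isLt
    have hjq : (j : ℕ) ≤ q := Nat.lt_succ_iff.mp j.isLt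
    simp only [pow_zero, Matrix.one_apply]
    by_cases hij : i = j
    · subst hij
      by_cases hq : (i : ℕ) = q <;> simp_all <;> omega
    · have hij' : (i : ℕ) ≠ (j : ℕ) := fun hc => hij (Fin.ext hc)
      split_ifs with h1 h2 h3 <;> first | rfl | omega
  | succ n ih =>
    intro i j
    have hiq : (i : ℕ) ≤ q := Nat.lt_succ_iff.mp i.isLt
    have hjq : (j : ℕ) ≤ q := Nat.lt_succ_iff.mp j.isLt
    rw [pow_succ', Matrix.mul_apply]
    by_cases hq : (i : ℕ) = q
    · have hsum : ∑ k, F i k * (F ^ n) k j = F i i * (F ^ n) i j := by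
        refine Finset.sum_eq_single i (fun k _ hk => ?_) (fun hc => absurd (Finset.mem_univ i) hc)
        have hk' : (k : ℕ) ≠ (i : ℕ) := fun hc => hk (Fin.ext hc)
        have hkq : (k : ℕ) ≤ q := Nat.lt_succ_iff.mp k.isLt
        rw [hF]
        have h1 : ¬ ((k : ℕ) = (i : ℕ) + 1) := by omega
        have h2 : ¬ ((i : ℕ) = q ∧ (k : ℕ) = q) := by rintro ⟨_, hc⟩; omega
        rw [if_neg h1, if_neg h2, zero_mul]
      have hFii : F i i = -θ := by
        rw [hF, if_neg (by omega : ¬ ((i : ℕ) = (i : ℕ) + 1)), if_pos ⟨hq, hq⟩]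
      rw [hsum, hFii, ih]
      by_cases hjq' : (j : ℕ) = q
      · rw [if_pos hjq', if_pos hjq']
        have h0 : q - (i : ℕ) = 0 := by omega
        rw [h0]
        simp only [Nat.zero_le, if_true, Nat.sub_zero]
        rw [pow_succ]
        ring
      · rw [if_neg hjq', if_neg hjq']
        have h1 : ¬ ((j : ℕ) = (i : ℕ) + n) := by
          intro hc
          rcases Nat.eq_zero_or_pos n with h | h
          · subst h; simp at hc; omega
          · omega
        have h2 : ¬ ((j : ℕ) = (i : ℕ) + (n + 1)) := by omega
        rw [if_neg h1, if_neg h2, mul_zero]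
    · -- i < q
      have hiq' : (i : ℕ) + 1 < q + 1 := by omega
      set i' : Fin (q + 1) := ⟨(i : ℕ) + 1, hiq'⟩ with hi'
      have hsum : ∑ k, F i k * (F ^ n) k j = F i i' * (F ^ n) i' j := by
        refine Finset.sum_eq_single i' (fun k _ hk => ?_) (fun hc => absurd (Finset.mem_univ i') hc)
        have hk' : (k : ℕ) ≠ (i : ℕ) + 1 := by
          intro hc; exact hk (Fin.ext hc)
        rw [hF]
        have h2 : ¬ ((i : ℕ) = q ∧ (k : ℕ) = q) := by rintro ⟨hc, _⟩; omega
        rw [if_neg hk', if_neg h2, zero_mul]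
      have h1 : (i' : ℕ) = (i : ℕ) + 1 := rfl
      have hFii' : F i i' = 1 := by rw [hF, if_pos h1]
      rw [hsum, hFii', one_mul, ih, h1]
      by_cases hjq' : (j : ℕ) = q
      · rw [if_pos hjq', if_pos hjq']
        have hcond : (q - ((i : ℕ) + 1) ≤ n) ↔ (q - (i : ℕ) ≤ n + 1) := by omega
        by_cases hc : q - ((i : ℕ) + 1) ≤ n
        · rw [if_pos hc, if_pos (hcond.mp hc)]
          congr 1
          omega
        · rw [if_neg hc, if_neg (fun hcc => hc (hcond.mpr hcc))]
      · rw [if_neg hjq', if_neg hjq']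
        have heq : ((j : ℕ) = (i : ℕ) + 1 + n) ↔ ((j : ℕ) = (i : ℕ) + (n + 1)) := by omega
        by_cases hc : (j : ℕ) = (i : ℕ) + 1 + n
        · rw [if_pos hc, if_pos (heq.mp hc)]
        · rw [if_neg hc, if_neg (fun hcc => hc (heq.mpr hcc))]

/-- Explicit matrix exponential of the drift matrix of the q-times integrated
Ornstein–Uhlenbeck SDE with drift parameter θ (θ = 0 giving the q-times
integrated Brownian motion). -/
theorem stmt18 (q : ℕ) (θ : ℝ) (hθ : 0 ≤ θ)
    (F : Matrix (Fin (q + 1)) (Fin (q + 1)) ℝ)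
    (hF : ∀ i j : Fin (q + 1),
      F i j = if (j : ℕ) = (i : ℕ) + 1 then 1
        else if (i : ℕ) = q ∧ (j : ℕ) = q then -θ else 0) :
    ∀ (h : ℝ) (i j : Fin (q + 1)),
      NormedSpace.exp (h • F) i j =
        if (j : ℕ) ≠ q then
          (if (i : ℕ) ≤ (j : ℕ) then
            h ^ ((j : ℕ) - (i : ℕ)) / (Nat.factorial ((j : ℕ) - (i : ℕ)) : ℝ) else 0)
        else
          h ^ (q - (i : ℕ)) / (Nat.factorial (q - (i : ℕ)) : ℝ) -
            θ * ∑' k : ℕ, if q + 1 - (i : ℕ) ≤ k then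
              (-θ) ^ (k + (i : ℕ) - (q + 1)) * h ^ k / (Nat.factorial k : ℝ) else 0 := by
  intro h i j
  have hpow := powF_entry q θ F hF
  -- the target matrix
  set M : Matrix (Fin (q + 1)) (Fin (q + 1)) ℝ := Matrix.of fun i j =>
    if (j : ℕ) ≠ q then
      (if (i : ℕ) ≤ (j : ℕ) then
        h ^ ((j : ℕ) - (i : ℕ)) / (Nat.factorial ((j : ℕ) - (i : ℕ)) : ℝ) else 0)
    else
      h ^ (q - (i : ℕ)) / (Nat.factorial (q - (i : ℕ)) : ℝ) -
        θ * ∑' k : ℕ, if q + 1 - (i : ℕ) ≤ k then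
          (-θ) ^ (k + (i : ℕ) - (q + 1)) * h ^ k / (Nat.factorial k : ℝ) else 0 with hM
  have key : HasSum (fun n : ℕ => ((n.factorial : ℝ))⁻¹ • (h • F) ^ n) M := by
    refine Pi.hasSum.mpr ?_
    intro i
    rw [Pi.hasSum]
    intro j
    have hiq : (i : ℕ) ≤ q := Nat.lt_succ_iff.mp i.isLt
    have hjq : (j : ℕ) ≤ q := Nat.lt_succ_iff.mp j.isLt
    have hfn : ∀ n : ℕ, (((n.factorial : ℝ))⁻¹ • (h • F) ^ n) i j
        = ((n.factorial : ℝ))⁻¹ * h ^ n * (F ^ n) i j := by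
      intro n
      rw [smul_pow]
      simp [Matrix.smul_apply, mul_assoc]
    by_cases hjq' : (j : ℕ) = q
    · -- column q
      have hMij : M i j = h ^ (q - (i : ℕ)) / (Nat.factorial (q - (i : ℕ)) : ℝ) +
          (-θ) * ∑' k : ℕ, (if q + 1 - (i : ℕ) ≤ k then
            (-θ) ^ (k + (i : ℕ) - (q + 1)) * h ^ k / (Nat.factorial k : ℝ) else 0) := by
        simp only [hM, Matrix.of_apply, if_neg (not_not.mpr hjq')]
        ring
      have hsg : Summable (fun k : ℕ => if q + 1 - (i : ℕ) ≤ k then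
          (-θ) ^ (k + (i : ℕ) - (q + 1)) * h ^ k / (Nat.factorial k : ℝ) else 0) := by
        apply Summable.of_norm_bounded (g := fun k => ((1 + θ) * |h|) ^ k / (Nat.factorial k : ℝ))
          (Real.summable_pow_div_factorial _)
        intro k
        by_cases hc : q + 1 - (i : ℕ) ≤ k
        · simp only [if_pos hc]
          rw [norm_div, norm_mul, norm_pow, norm_pow, norm_neg,
            Real.norm_eq_abs, Real.norm_eq_abs, Real.norm_natCast,
            abs_of_nonneg hθ, mul_pow]
          apply div_le_div_of_nonneg_right _ (by positivity)
          apply mul_le_mul _ le_rfl (by positivity) (by positivity)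
          calc θ ^ (k + (i : ℕ) - (q + 1)) ≤ (1 + θ) ^ (k + (i : ℕ) - (q + 1)) := by
                apply pow_le_pow_left₀ hθ; linarith
            _ ≤ (1 + θ) ^ k := by
                apply pow_le_pow_right₀ (by linarith); omega
        · simp only [if_neg hc, norm_zero]
          positivity
      have hmain : (fun n : ℕ => (((n.factorial : ℝ))⁻¹ • (h • F) ^ n) i j)
          = fun n => (if n = q - (i : ℕ) then
              h ^ (q - (i : ℕ)) / (Nat.factorial (q - (i : ℕ)) : ℝ) else 0) +
            (-θ) * (if q + 1 - (i : ℕ) ≤ n then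
              (-θ) ^ (n + (i : ℕ) - (q + 1)) * h ^ n / (Nat.factorial n : ℝ) else 0) := by
        funext n
        rw [hfn n, hpow n i j, if_pos hjq']
        by_cases h1 : n = q - (i : ℕ)
        · rw [if_pos h1, if_pos (le_of_eq h1.symm), if_neg (by omega : ¬ (q + 1 - (i : ℕ) ≤ n)),
            h1, Nat.sub_self, pow_zero, mul_one, mul_zero, add_zero]
          ring
        · by_cases h2 : q - (i : ℕ) ≤ n
          · have h3 : q + 1 - (i : ℕ) ≤ n := by omega
            rw [if_pos h2, if_neg h1, if_pos h3, zero_add]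
            have h4 : n - (q - (i : ℕ)) = (n + (i : ℕ) - (q + 1)) + 1 := by omega
            rw [h4, pow_succ]
            ring
          · rw [if_neg h2, if_neg h1, if_neg (by omega : ¬ (q + 1 - (i : ℕ) ≤ n)),
              mul_zero, mul_zero, add_zero]
      rw [hmain, hMij]
      exact (hasSum_ite_eq _ _).add ((hsg.hasSum).mul_left (-θ))
    · -- column j ≠ q
      have hMij : M i j = if (i : ℕ) ≤ (j : ℕ) then
          h ^ ((j : ℕ) - (i : ℕ)) / (Nat.factorial ((j : ℕ) - (i : ℕ)) : ℝ) else 0 := by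
        simp only [hM, Matrix.of_apply, if_pos hjq']
      have hmain : (fun n : ℕ => (((n.factorial : ℝ))⁻¹ • (h • F) ^ n) i j)
          = fun n => if (i : ℕ) ≤ (j : ℕ) then
              (if n = (j : ℕ) - (i : ℕ) then
                h ^ ((j : ℕ) - (i : ℕ)) / (Nat.factorial ((j : ℕ) - (i : ℕ)) : ℝ) else 0)
              else 0 := by
        funext n
        rw [hfn n, hpow n i j, if_neg hjq']
        by_cases hij : (i : ℕ) ≤ (j : ℕ)
        · rw [if_pos hij]
          by_cases hn : n = (j : ℕ) - (i : ℕ)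
          · subst hn
            rw [if_pos (by omega : (j : ℕ) = (i : ℕ) + ((j : ℕ) - (i : ℕ))), if_pos rfl,
              mul_one]
            ring
          · rw [if_neg (by omega : ¬ ((j : ℕ) = (i : ℕ) + n)), if_neg hn, mul_zero]
        · rw [if_neg hij, if_neg (by omega : ¬ ((j : ℕ) = (i : ℕ) + n)), mul_zero]
      rw [hmain, hMij]
      by_cases hij : (i : ℕ) ≤ (j : ℕ)
      · simp only [if_pos hij]
        exact hasSum_ite_eq _ _
      · simp only [if_neg hij]
        exact hasSum_zero
  have hexp : NormedSpace.exp (h • F) = M := by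
    rw [NormedSpace.exp_eq_tsum ℝ]
    exact key.tsum_eq
  rw [hexp, hM]
  rfl
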